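/- For N ≥ 2, the function u(x) = ln(1 + x_N) is a positive solution of -Δu = e^{-2u} in ℝ^N_+ with u = 0 on ∂ℝ^N_+, u is strictly increasing in the x_N direction, and u is unbounded. -/

import Mathlib

open Set Filter

/-- The Laplacian of `u : ℝ^N → ℝ`, as the sum of the second partial derivatives. -/
noncomputable def lap {N : ℕ} (u : EuclideanSpace ℝ (Fin N) → ℝ)
    (x : EuclideanSpace ℝ (Fin N)) : ℝ :=
  ∑ i, fderiv ℝ (fun y => fderiv ℝ u y (EuclideanSpace.single i 1)) x
    (EuclideanSpace.single i 1)

/-- For N ≥ 2, `u(x) = ln(1 + x_N)` is a positive solution of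
`-Δu = e^{-2u}` in the upper half-space with `u = 0` on the boundary; it is strictly
increasing in the `x_N` direction and unbounded. -/
theorem stmt4 (N : ℕ) (hN : 2 ≤ N) (lst : Fin N) (hlst : (lst : ℕ) = N - 1)
    (u : EuclideanSpace ℝ (Fin N) → ℝ)
    (hu : u = fun x => Real.log (1 + x lst)) :
    (∀ x : EuclideanSpace ℝ (Fin N), 0 < x lst → - lap u x = Real.exp (-(2 * u x))) ∧
    (∀ x : EuclideanSpace ℝ (Fin N), 0 < x lst → 0 < u x) ∧
    (∀ x : EuclideanSpace ℝ (Fin N), x lst = 0 → u x = 0) ∧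
    (∀ x : EuclideanSpace ℝ (Fin N), 0 < x lst →
      0 < fderiv ℝ u x (EuclideanSpace.single lst 1)) ∧
    (∀ M : ℝ, ∃ x : EuclideanSpace ℝ (Fin N), 0 < x lst ∧ M < u x) := by
  subst hu
  set g : EuclideanSpace ℝ (Fin N) →L[ℝ] ℝ := EuclideanSpace.proj lst with hg
  have hgv : ∀ y : EuclideanSpace ℝ (Fin N), g y = y lst := fun _ => rfl
  have h1 : ∀ x : EuclideanSpace ℝ (Fin N),
      HasFDerivAt (fun y : EuclideanSpace ℝ (Fin N) => 1 + y lst) g x := by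
    intro x
    exact (g.hasFDerivAt (x := x)).const_add 1
  have hder : ∀ x : EuclideanSpace ℝ (Fin N), -1 < x lst →
      HasFDerivAt (fun y : EuclideanSpace ℝ (Fin N) => Real.log (1 + y lst))
        ((1 + x lst)⁻¹ • g) x := by
    intro x hx
    have h2 := (Real.hasDerivAt_log (by linarith : (1:ℝ) + x lst ≠ 0)).comp_hasFDerivAt x (h1 x)
    exact h2
  have hfd : ∀ x : EuclideanSpace ℝ (Fin N), -1 < x lst →
      fderiv ℝ (fun y : EuclideanSpace ℝ (Fin N) => Real.log (1 + y lst)) x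
        = (1 + x lst)⁻¹ • g := fun x hx => (hder x hx).fderiv
  have hSopen : IsOpen {y : EuclideanSpace ℝ (Fin N) | -1 < y lst} := by
    have : {y : EuclideanSpace ℝ (Fin N) | -1 < y lst} = g ⁻¹' (Ioi (-1)) := rfl
    rw [this]; exact g.continuous.isOpen_preimage _ isOpen_Ioi
  refine ⟨?_, ?_, ?_, ?_, ?_⟩
  · -- PDE
    intro x hx
    have hx' : -1 < x lst := by linarith
    have hxne : (1:ℝ) + x lst ≠ 0 := by linarith
    have hsum : lap (fun y : EuclideanSpace ℝ (Fin N) => Real.log (1 + y lst)) x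
        = -((1 + x lst)^2)⁻¹ := by
      unfold lap
      have key : ∀ i : Fin N,
          fderiv ℝ (fun y => fderiv ℝ (fun z : EuclideanSpace ℝ (Fin N) => Real.log (1 + z lst)) y
            (EuclideanSpace.single i 1)) x (EuclideanSpace.single i 1)
          = if lst = i then -(((1 + x lst)^2)⁻¹) else 0 := by
        intro i
        have hc : ∀ y : EuclideanSpace ℝ (Fin N), g (EuclideanSpace.single i 1)
            = if lst = i then (1:ℝ) else 0 := by
          intro y; rw [hgv, EuclideanSpace.single_apply]
        by_cases hli : lst = i
        · have hev : (fun y => fderiv ℝ (fun z : EuclideanSpace ℝ (Fin N) => Real.log (1 + z lst)) y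
                (EuclideanSpace.single i 1)) =ᶠ[nhds x]
              (fun y : EuclideanSpace ℝ (Fin N) => (1 + y lst)⁻¹) := by
            filter_upwards [hSopen.mem_nhds hx'] with y hy
            rw [hfd y hy]
            simp [hc y, hli]
          have h3 : HasFDerivAt (fun y : EuclideanSpace ℝ (Fin N) => (1 + y lst)⁻¹)
              ((-((1 + x lst)^2)⁻¹) • g) x := by
            have := (hasDerivAt_inv hxne).comp_hasFDerivAt x (h1 x)
            exact this
          rw [hev.fderiv_eq, h3.fderiv]
          simp [hc x, hli]
        · have hev : (fun y => fderiv ℝ (fun z : EuclideanSpace ℝ (Fin N) => Real.log (1 + z lst)) y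
                (EuclideanSpace.single i 1)) =ᶠ[nhds x]
              (fun _ : EuclideanSpace ℝ (Fin N) => (0:ℝ)) := by
            filter_upwards [hSopen.mem_nhds hx'] with y hy
            rw [hfd y hy]
            simp [hc y, hli]
          rw [hev.fderiv_eq, fderiv_fun_const]
          simp [hli]
      rw [Finset.sum_congr rfl (fun i _ => key i)]
      rw [Finset.sum_ite_eq]
      simp
    rw [hsum]
    have hpos : (0:ℝ) < 1 + x lst := by linarith
    have : -(2 * Real.log (1 + x lst)) = Real.log (((1 + x lst)^2)⁻¹) := by
      rw [Real.log_inv, Real.log_pow]; push_cast; ring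
    rw [this, Real.exp_log (by positivity)]
    ring
  · intro x hx
    simpa using Real.log_pos (by linarith)
  · intro x hx
    simp [hx]
  · intro x hx
    have hx' : -1 < x lst := by linarith
    rw [hfd x hx']
    have hone : g (EuclideanSpace.single lst 1) = 1 := by
      rw [hgv, EuclideanSpace.single_apply]; simp
    simp only [ContinuousLinearMap.coe_smul', Pi.smul_apply, hone, smul_eq_mul, mul_one]
    positivity
  · intro M
    refine ⟨EuclideanSpace.single lst (Real.exp M), ?_, ?_⟩
    · rw [EuclideanSpace.single_apply]; simp [Real.exp_pos]
    · show M < Real.log (1 + (EuclideanSpace.single lst (Real.exp M) : EuclideanSpace ℝ (Fin N)) lst)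
      rw [EuclideanSpace.single_apply, if_pos rfl]
      have : M = Real.log (Real.exp M) := (Real.log_exp M).symm
      nth_rewrite 1 [this]
      exact Real.log_lt_log (Real.exp_pos M) (by linarith [Real.exp_pos M])
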